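/- Let C = diag(1,2,3) and let P(b₁,b₂,b₃,β) be the 3×3 real symmetric matrix with diagonal entries b₁, b₂, b₃, entries β in positions (2,3) and (3,2), and zeros elsewhere. If b₁, b₂, b₃ > 0 and 8b₂b₃ − 9β² ≥ 0, then P is positive definite and satisfies C*P + PC ≥ 2P, but P is not diagonal whenever β ≠ 0, hence not of the form Σⱼ bⱼ wⱼwⱼ* with wⱼ eigenvectors of C*. -/

import Mathlib

open Matrix Finset

theorem stmt7 (b1 b2 b3 β : ℝ) (hb1 : 0 < b1) (hb2 : 0 < b2) (hb3 : 0 < b3)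
    (hβ : 0 ≤ 8 * b2 * b3 - 9 * β ^ 2) :
    (!![b1, 0, 0; 0, b2, β; 0, β, b3] : Matrix (Fin 3) (Fin 3) ℝ).PosDef ∧
    ((Matrix.diagonal ![1, 2, 3])ᵀ * !![b1, 0, 0; 0, b2, β; 0, β, b3] +
        !![b1, 0, 0; 0, b2, β; 0, β, b3] * Matrix.diagonal ![1, 2, 3] -
        (2 : ℝ) • !![b1, 0, 0; 0, b2, β; 0, β, b3]).PosSemidef ∧
    (β ≠ 0 → ¬ (!![b1, 0, 0; 0, b2, β; 0, β, b3] : Matrix (Fin 3) (Fin 3) ℝ).IsDiag) ∧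
    (β ≠ 0 →
      ¬ ∃ (w : Fin 3 → Fin 3 → ℝ) (c : Fin 3 → ℝ) (lam : Fin 3 → ℝ),
          (∀ j, 0 < c j) ∧ (∀ j, w j ≠ 0) ∧
          (∀ j, (Matrix.diagonal ![1, 2, 3] : Matrix (Fin 3) (Fin 3) ℝ)ᵀ.mulVec (w j) =
            lam j • w j) ∧
          !![b1, 0, 0; 0, b2, β; 0, β, b3] = ∑ j, c j • vecMulVec (w j) (w j)) := by
  refine ⟨?_, ?_, ?_, ?_⟩
  · refine Matrix.posDef_iff_dotProduct_mulVec.mpr ⟨?_, fun x hx => ?_⟩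
    · ext i j
      fin_cases i <;> fin_cases j <;>
        simp [Matrix.conjTranspose_apply, Matrix.vecHead, Matrix.vecTail]
    · have hx' : x 0 ≠ 0 ∨ x 1 ≠ 0 ∨ x 2 ≠ 0 := by
        by_contra h
        push_neg at h
        exact hx (by ext i; fin_cases i <;> simp [h.1, h.2.1, h.2.2])
      simp only [dotProduct, Matrix.mulVec, Fin.sum_univ_three]
      norm_num [Matrix.cons_val_zero, Matrix.cons_val_one, Matrix.cons_val_two, Matrix.vecHead, Matrix.vecTail]
      rcases hx' with h | h | h
      · have h0 : 0 < x 0 ^ 2 := by positivity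
        nlinarith [mul_pos hb1 h0, sq_nonneg (b2 * x 1 + β * x 2),
          mul_nonneg hβ (sq_nonneg (x 2)),
          mul_nonneg (mul_pos hb2 hb3).le (sq_nonneg (x 2))]
      · have h1 : 0 < x 1 ^ 2 := by positivity
        nlinarith [sq_nonneg (b3 * x 2 + β * x 1), mul_nonneg hβ (sq_nonneg (x 1)),
          mul_pos (mul_pos hb2 hb3) h1, sq_nonneg (x 0), mul_nonneg hb1.le (sq_nonneg (x 0))]
      · have h2 : 0 < x 2 ^ 2 := by positivity
        nlinarith [sq_nonneg (b2 * x 1 + β * x 2), mul_nonneg hβ (sq_nonneg (x 2)),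
          mul_pos (mul_pos hb2 hb3) h2, mul_nonneg hb1.le (sq_nonneg (x 0))]
  · refine Matrix.posSemidef_iff_dotProduct_mulVec.mpr ⟨?_, fun x => ?_⟩
    · ext i j
      fin_cases i <;> fin_cases j <;>
        simp [Matrix.conjTranspose_apply, Matrix.mul_apply, Fin.sum_univ_three,
          Matrix.diagonal, Matrix.vecHead, Matrix.vecTail] <;> ring
    · simp only [dotProduct, Matrix.mulVec, Matrix.sub_apply, Matrix.add_apply,
        Matrix.smul_apply, Matrix.mul_apply, Fin.sum_univ_three]
      norm_num [Matrix.diagonal, Matrix.cons_val_two, Matrix.vecHead, Matrix.vecTail,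
        show (2:Fin 3) ≠ 0 by decide, show (2:Fin 3) ≠ 1 by decide,
        show (1:Fin 3) ≠ 2 by decide, show (0:Fin 3) ≠ 2 by decide]
      nlinarith [sq_nonneg (2 * b2 * x 1 + 3 * β * x 2), mul_nonneg hβ (sq_nonneg (x 2)),
        mul_nonneg (mul_pos hb2 hb3).le (sq_nonneg (x 2)), sq_nonneg (x 1), sq_nonneg (x 2)]
  · intro hβ0 hdiag
    have := hdiag (i := 1) (j := 2) (by decide)
    simp at this
    exact hβ0 this
  · rintro hβ0 ⟨w, c, lam, hc, hw, heig, hsum⟩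
    have key : ∀ j, w j 1 * w j 2 = 0 := by
      intro j
      by_contra hk
      have h1 : w j 1 ≠ 0 := fun h => hk (by rw [h]; ring)
      have h2 : w j 2 ≠ 0 := fun h => hk (by rw [h]; ring)
      have e1 := congrFun (heig j) 1
      have e2 := congrFun (heig j) 2
      simp [Matrix.mulVec_diagonal, Matrix.diagonal_transpose, Pi.smul_apply,
        smul_eq_mul, Matrix.vecHead, Matrix.vecTail] at e1 e2
      have l1 : lam j = 2 := (e1.resolve_right h1).symm
      have l2 : lam j = 3 := (e2.resolve_right h2).symm
      rw [l1] at l2; norm_num at l2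
    have hβeq : β = ∑ j, c j * (w j 1 * w j 2) := by
      have := congrFun (congrFun hsum 1) 2
      simpa [Matrix.sum_apply, Matrix.vecMulVec_apply, Matrix.vecHead, Matrix.vecTail]
        using this
    apply hβ0
    rw [hβeq]
    exact Finset.sum_eq_zero fun j _ => by rw [key j, mul_zero]
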